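/- arXiv:math/0011133 — 3 statements merged into one kernel-verified Lean document; each statement's English description precedes it below -/
import Mathlib

section
/- Fredholm alternative, first case: if A = B + F with B an isomorphism of a Hilbert space H and F finite-rank, and if ker(A) = {0}, then A is surjective, and hence A is an isomorphism. -/
theorem fredholm_alternative_injective_case
    {H : Type*} [NormedAddCommGroup H] [InnerProductSpace ℂ H] [CompleteSpace H]
    (B : H ≃L[ℂ] H) (F : H →L[ℂ] H)
    (hF : FiniteDimensional ℂ (LinearMap.range (F : H →ₗ[ℂ] H)))
    (A : H →L[ℂ] H) (hA : A = (B : H →L[ℂ] H) + F)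
    (hker : LinearMap.ker (A : H →ₗ[ℂ] H) = ⊥) :
    Function.Surjective A ∧ ∃ E : H ≃L[ℂ] H, (E : H →L[ℂ] H) = A := by
  have hAinj : Function.Injective A := LinearMap.ker_eq_bot.mp hker
  set K : H →L[ℂ] H := (B.symm : H →L[ℂ] H).comp F with hKdef
  set G : H →L[ℂ] H := ContinuousLinearMap.id ℂ H + K with hGdef
  have hcomp : ∀ x, A x = B (G x) := by
    intro x
    simp [hA, hGdef, hKdef, map_add]
  have hGinj : Function.Injective G := by
    intro x y hxy
    apply hAinj
    rw [hcomp, hcomp, hxy]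
  -- V = range K is finite dimensional
  have hV : FiniteDimensional ℂ (LinearMap.range (K : H →ₗ[ℂ] H)) := by
    have : LinearMap.range (K : H →ₗ[ℂ] H) = (LinearMap.range (F : H →ₗ[ℂ] H)).map (B.symm : H →ₗ[ℂ] H) := by
      rw [hKdef]
      exact LinearMap.range_comp _ _
    rw [this]
    exact Module.Finite.map _ _
  set V := LinearMap.range (K : H →ₗ[ℂ] H) with hVdef
  have hmap : ∀ x ∈ V, G x ∈ V := by
    intro x hx
    have : G x = x + K x := by simp [hGdef]
    rw [this]
    exact V.add_mem hx (LinearMap.mem_range_self (K : H →ₗ[ℂ] H) x)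
  set g : V →ₗ[ℂ] V := (G : H →ₗ[ℂ] H).restrict hmap with hgdef
  have hginj : Function.Injective g := by
    intro ⟨x, hx⟩ ⟨y, hy⟩ hxy
    have : G x = G y := congrArg Subtype.val hxy
    exact Subtype.ext (hGinj this)
  have hgsurj : Function.Surjective g := LinearMap.surjective_of_injective hginj
  have hGsurj : Function.Surjective G := by
    intro y
    obtain ⟨v, hv⟩ := hgsurj ⟨K y, LinearMap.mem_range_self (K : H →ₗ[ℂ] H) y⟩
    have hv' : G (v : H) = K y := congrArg Subtype.val hv
    refine ⟨y - (v : H), ?_⟩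
    have h1 : G (y - (v : H)) = G y - G (v : H) := map_sub G _ _
    rw [h1, hv']
    simp [hGdef]
  have hAsurj : Function.Surjective A := by
    intro y
    obtain ⟨x, hx⟩ := hGsurj (B.symm y)
    exact ⟨x, by rw [hcomp, hx]; simp⟩
  refine ⟨hAsurj, ?_⟩
  exact ⟨ContinuousLinearEquiv.ofBijective A hker (LinearMap.range_eq_top.mpr hAsurj),
    ContinuousLinearEquiv.coe_ofBijective _ _ _⟩
end

section
/- Fredholm alternative, solvability criterion: if A = B + F with B an isomorphism of a Hilbert space H and F finite-rank, then for f ∈ H the equation A u = f has a solution if and only if ⟨f, ψ⟩ = 0 for every ψ ∈ ker(A*). -/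
open scoped InnerProductSpace
open ContinuousLinearMap

/-- In a Hilbert space, the sum of a closed submodule and a finite-dimensional
submodule is closed. -/
lemma aux_closed_sup {H : Type*} [NormedAddCommGroup H] [InnerProductSpace ℂ H]
    [CompleteSpace H] (C D : Submodule ℂ H) (hC : IsClosed (C : Set H)) (hD : FiniteDimensional ℂ D) :
    IsClosed ((C ⊔ D : Submodule ℂ H) : Set H) := by
  haveI : CompleteSpace C := hC.completeSpace_coe
  set P := C.orthogonalProjectionOnto with hP
  set Q : H →L[ℂ] H := ContinuousLinearMap.id ℂ H - C.subtypeL.comp P with hQdef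
  have hQ : ∀ x : H, Q x = x - (P x : H) := fun x => rfl
  set E : Submodule ℂ H := D.map (Q : H →ₗ[ℂ] H) with hE
  haveI : FiniteDimensional ℂ E := Module.Finite.map D (Q : H →ₗ[ℂ] H)
  have hEort : E ≤ Cᗮ := by
    rintro _ ⟨d, _, rfl⟩
    show Q d ∈ Cᗮ
    rw [hQ]
    exact Submodule.sub_starProjection_mem_orthogonal (K := C) d
  have hsup : (C ⊔ D : Submodule ℂ H) = C ⊔ E := by
    apply le_antisymm
    · apply sup_le le_sup_left
      intro d hd
      have : d = (P d : H) + Q d := by rw [hQ]; abel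
      rw [this]
      exact Submodule.add_mem _ (Submodule.mem_sup_left (P d).2)
        (Submodule.mem_sup_right ⟨d, hd, rfl⟩)
    · apply sup_le le_sup_left
      rintro _ ⟨d, hd, rfl⟩
      show Q d ∈ C ⊔ D
      rw [hQ]
      exact Submodule.sub_mem _ (Submodule.mem_sup_right hd)
        (Submodule.mem_sup_left (P d).2)
  have hset : ((C ⊔ E : Submodule ℂ H) : Set H) = Q ⁻¹' (E : Set H) := by
    ext x
    simp only [Set.mem_preimage, SetLike.mem_coe]
    constructor
    · intro hx
      rcases Submodule.mem_sup.1 hx with ⟨c, hc, e, he, rfl⟩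
      have hPc : (P c : H) = c := Submodule.starProjection_eq_self_iff.2 hc
      have hPe : P e = 0 :=
        Submodule.orthogonalProjectionOnto_apply_of_mem_orthogonal (hEort he)
      have : Q (c + e) = e := by
        rw [hQ, map_add, Submodule.coe_add, hPc, hPe, Submodule.coe_zero]
        abel
      rw [this]; exact he
    · intro hx
      have : x = (P x : H) + Q x := by rw [hQ]; abel
      rw [this]
      exact Submodule.add_mem _ (Submodule.mem_sup_left (P x).2)
        (Submodule.mem_sup_right hx)
  rw [hsup, hset]
  exact (E.closed_of_finiteDimensional).preimage Q.continuous

/-- If `K` has finite rank then `id + K` has closed range. -/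
lemma aux_range_one_add_closed {H : Type*} [NormedAddCommGroup H] [InnerProductSpace ℂ H]
    [CompleteSpace H] (K : H →L[ℂ] H) (hK : FiniteDimensional ℂ (LinearMap.range (K : H →ₗ[ℂ] H))) :
    IsClosed ((LinearMap.range ((ContinuousLinearMap.id ℂ H + K : H →L[ℂ] H) : H →ₗ[ℂ] H) : Submodule ℂ H) : Set H) := by
  set T : H →L[ℂ] H := ContinuousLinearMap.id ℂ H + K with hT
  have hTapp : ∀ x : H, T x = x + K x := fun x => rfl
  set W : Submodule ℂ H := LinearMap.range (K : H →ₗ[ℂ] H) with hW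
  haveI : FiniteDimensional ℂ W := hK
  have hWclosed : IsClosed (W : Set H) := W.closed_of_finiteDimensional
  haveI : CompleteSpace W := hWclosed.completeSpace_coe
  -- range T = T(Wᗮ) ⊔ T(W)
  have htop : W ⊔ Wᗮ = ⊤ := Submodule.sup_orthogonal_of_hasOrthogonalProjection
  have hrange : LinearMap.range (T : H →ₗ[ℂ] H)
      = (Wᗮ.map (T : H →ₗ[ℂ] H)) ⊔ (W.map (T : H →ₗ[ℂ] H)) := by
    rw [← Submodule.map_sup, sup_comm, htop, Submodule.map_top, LinearMap.range_eq_map]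
  -- T is bounded below on Wᗮ
  have hbelow : ∀ x ∈ Wᗮ, ‖x‖ ≤ ‖T x‖ := by
    intro x hx
    have horth : ⟪x, K x⟫_ℂ = 0 := by
      have hmem : K x ∈ W := LinearMap.mem_range_self _ x
      have := (Submodule.mem_orthogonal W x).1 hx (K x) hmem
      rwa [inner_eq_zero_symm] at this
    have hpyth : ‖x + K x‖ * ‖x + K x‖ = ‖x‖ * ‖x‖ + ‖K x‖ * ‖K x‖ :=
      norm_add_sq_eq_norm_sq_add_norm_sq_of_inner_eq_zero x (K x) horth
    rw [hTapp]
    nlinarith [norm_nonneg x, norm_nonneg (K x), norm_nonneg (x + K x)]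
  -- the image of Wᗮ under T is closed
  have hmapclosed : IsClosed ((Wᗮ.map (T : H →ₗ[ℂ] H) : Submodule ℂ H) : Set H) := by
    haveI : CompleteSpace Wᗮ := W.isClosed_orthogonal.completeSpace_coe
    set g : Wᗮ → H := fun x => T x with hg
    have hanti : AntilipschitzWith 1 g := by
      refine AntilipschitzWith.of_le_mul_dist fun x y => ?_
      have hxy : (x : H) - y ∈ Wᗮ := Submodule.sub_mem _ x.2 y.2
      have := hbelow _ hxy
      simpa [hg, dist_eq_norm, ← map_sub] using this
    have hcont : UniformContinuous g :=
      T.uniformContinuous.comp uniformContinuous_subtype_val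
    have hrangeg : Set.range g = ((Wᗮ.map (T : H →ₗ[ℂ] H) : Submodule ℂ H) : Set H) := by
      ext y
      simp only [Set.mem_range, SetLike.mem_coe, Submodule.mem_map]
      constructor
      · rintro ⟨x, rfl⟩; exact ⟨x, x.2, rfl⟩
      · rintro ⟨x, hx, rfl⟩; exact ⟨⟨x, hx⟩, rfl⟩
    rw [← hrangeg]
    exact hanti.isClosed_range hcont
  haveI : FiniteDimensional ℂ (Submodule.map (T : H →ₗ[ℂ] H) W) :=
    (inferInstance : FiniteDimensional ℂ (Submodule.map (T : H →ₗ[ℂ] H) W))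
  rw [show LinearMap.range ((ContinuousLinearMap.id ℂ H + K : H →L[ℂ] H) : H →ₗ[ℂ] H) = LinearMap.range (T : H →ₗ[ℂ] H) from rfl, hrange]
  exact aux_closed_sup _ _ hmapclosed inferInstance

theorem fredholm_alternative_solvability
    {H : Type*} [NormedAddCommGroup H] [InnerProductSpace ℂ H] [CompleteSpace H]
    (B : H ≃L[ℂ] H) (F : H →L[ℂ] H)
    (hF : FiniteDimensional ℂ (LinearMap.range (F : H →ₗ[ℂ] H)))
    (A : H →L[ℂ] H) (hA : A = (B : H →L[ℂ] H) + F) (f : H) :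
    (∃ u : H, A u = f) ↔ ∀ ψ ∈ LinearMap.ker (adjoint A : H →ₗ[ℂ] H), ⟪f, ψ⟫_ℂ = 0 := by
  -- Factor A = B ∘ (1 + B⁻¹ F)
  set K : H →L[ℂ] H := (B.symm : H →L[ℂ] H).comp F with hK
  set T : H →L[ℂ] H := ContinuousLinearMap.id ℂ H + K with hT
  have hAfact : ∀ x : H, A x = B (T x) := by
    intro x
    have : T x = x + B.symm (F x) := rfl
    rw [this, map_add, B.apply_symm_apply, hA]
    rfl
  have hKfd : FiniteDimensional ℂ (LinearMap.range (K : H →ₗ[ℂ] H)) := by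
    have : LinearMap.range (K : H →ₗ[ℂ] H) = (LinearMap.range (F : H →ₗ[ℂ] H)).map ((B.symm : H →L[ℂ] H) : H →ₗ[ℂ] H) := by
      ext y
      simp only [LinearMap.mem_range, Submodule.mem_map]
      constructor
      · rintro ⟨x, rfl⟩; exact ⟨F x, ⟨x, rfl⟩, rfl⟩
      · rintro ⟨_, ⟨x, rfl⟩, rfl⟩; exact ⟨x, rfl⟩
    rw [this]
    exact (inferInstance :
      FiniteDimensional ℂ ((LinearMap.range (F : H →ₗ[ℂ] H)).map ((B.symm : H →L[ℂ] H) : H →ₗ[ℂ] H)))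
  -- range A is closed
  have hTclosed := aux_range_one_add_closed K hKfd
  have hset : ((LinearMap.range (A : H →ₗ[ℂ] H) : Submodule ℂ H) : Set H)
      = ⇑(B.toHomeomorph) '' ((LinearMap.range (T : H →ₗ[ℂ] H) : Submodule ℂ H) : Set H) := by
    ext y
    simp only [SetLike.mem_coe, LinearMap.mem_range, Set.mem_image]
    constructor
    · rintro ⟨x, rfl⟩
      exact ⟨T x, ⟨x, rfl⟩, (hAfact x).symm⟩
    · rintro ⟨_, ⟨x, rfl⟩, rfl⟩
      exact ⟨x, hAfact x⟩
  have hclosed : IsClosed ((LinearMap.range (A : H →ₗ[ℂ] H) : Submodule ℂ H) : Set H) := by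
    rw [hset]
    exact (B.toHomeomorph.isClosed_image).2 hTclosed
  -- ker A* = (range A)ᗮ
  have hker : LinearMap.ker (adjoint A : H →ₗ[ℂ] H) = (LinearMap.range (A : H →ₗ[ℂ] H))ᗮ := by
    ext ψ
    simp only [LinearMap.mem_ker, Submodule.mem_orthogonal, ContinuousLinearMap.coe_coe]
    constructor
    · rintro h0 _ ⟨x, rfl⟩
      rw [ContinuousLinearMap.coe_coe, ← adjoint_inner_right, h0, inner_zero_right]
    · intro h0
      apply ext_inner_left ℂ
      intro v
      rw [adjoint_inner_right, inner_zero_right]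
      exact h0 (A v) ⟨v, rfl⟩
  -- conclude
  have horth : (LinearMap.ker (adjoint A : H →ₗ[ℂ] H))ᗮ = LinearMap.range (A : H →ₗ[ℂ] H) := by
    rw [hker, Submodule.orthogonal_orthogonal_eq_closure,
      hclosed.submodule_topologicalClosure_eq]
  constructor
  · rintro ⟨u, rfl⟩ ψ hψ
    have : ψ ∈ (LinearMap.range (A : H →ₗ[ℂ] H))ᗮ := hker ▸ hψ
    exact this (A u) ⟨u, rfl⟩
  · intro h
    have hf : f ∈ (LinearMap.ker (adjoint A : H →ₗ[ℂ] H))ᗮ := by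
      intro ψ hψ
      rw [← inner_eq_zero_symm]
      exact h ψ hψ
    rw [horth] at hf
    exact hf
end

section
/- If T is a bounded finite-rank operator on a Hilbert space H, then dim ker(I + T) = dim ker(I + T*). -/
open ContinuousLinearMap

local notation "⟪" x ", " y "⟫" => @inner ℂ _ _ x y

/-- In a finite-dimensional complex inner product space, the kernel of the adjoint is the
orthogonal complement of the range. -/
lemma aux_ker_adjoint_eq {V : Type*} [NormedAddCommGroup V] [InnerProductSpace ℂ V]
    [FiniteDimensional ℂ V] (f : V →ₗ[ℂ] V) :
    LinearMap.ker (LinearMap.adjoint f) = (LinearMap.range f)ᗮ := by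
  ext x
  simp only [LinearMap.mem_ker, Submodule.mem_orthogonal]
  constructor
  · rintro hx u ⟨y, rfl⟩
    have h := LinearMap.adjoint_inner_right f y x
    rw [hx, inner_zero_right] at h
    exact h.symm
  · intro hx
    rw [← inner_self_eq_zero (𝕜 := ℂ),
      LinearMap.adjoint_inner_right f (LinearMap.adjoint f x) x]
    exact hx _ ⟨_, rfl⟩

/-- Nullity of a map equals nullity of its adjoint in finite dimension. -/
lemma aux_finrank_ker_adjoint {V : Type*} [NormedAddCommGroup V] [InnerProductSpace ℂ V]
    [FiniteDimensional ℂ V] (f : V →ₗ[ℂ] V) :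
    Module.finrank ℂ (LinearMap.ker f) = Module.finrank ℂ (LinearMap.ker (LinearMap.adjoint f)) := by
  have h1 := LinearMap.finrank_range_add_finrank_ker f
  have h2 := LinearMap.finrank_range_add_finrank_ker (LinearMap.adjoint f)
  have h3 := Submodule.finrank_add_finrank_orthogonal (K := LinearMap.range f)
  rw [aux_ker_adjoint_eq f] at h2 ⊢
  omega

theorem ker_dim_eq_ker_adjoint_dim
    {H : Type*} [NormedAddCommGroup H] [InnerProductSpace ℂ H] [CompleteSpace H]
    (T : H →L[ℂ] H) (hfin : FiniteDimensional ℂ (LinearMap.range (T : H →ₗ[ℂ] H))) :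
    Module.finrank ℂ (LinearMap.ker (((1 : H →L[ℂ] H) + T : H →L[ℂ] H) : H →ₗ[ℂ] H)) =
      Module.finrank ℂ (LinearMap.ker (((1 : H →L[ℂ] H) + adjoint T : H →L[ℂ] H) : H →ₗ[ℂ] H)) := by
  -- the adjoint also has finite rank
  have hfin' : FiniteDimensional ℂ (LinearMap.range ((adjoint T : H →L[ℂ] H) : H →ₗ[ℂ] H)) := by
    have hle : LinearMap.range ((adjoint T : H →L[ℂ] H) : H →ₗ[ℂ] H) ≤
        Submodule.map (adjoint T).toLinearMap (LinearMap.range (T : H →ₗ[ℂ] H)) := by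
      rintro _ ⟨y, rfl⟩
      obtain ⟨p, hp, q, hq, rfl⟩ := (LinearMap.range (T : H →ₗ[ℂ] H)).exists_add_mem_mem_orthogonal y
      have hq0 : adjoint T q = 0 := by
        rw [← inner_self_eq_zero (𝕜 := ℂ), ContinuousLinearMap.adjoint_inner_left]
        exact (Submodule.mem_orthogonal' _ q).1 hq _ ⟨_, rfl⟩
      refine ⟨p, hp, ?_⟩
      simp [map_add, hq0]
    exact Submodule.finiteDimensional_of_le hle
  set V : Submodule ℂ H := LinearMap.range (T : H →ₗ[ℂ] H) ⊔ LinearMap.range ((adjoint T : H →L[ℂ] H) : H →ₗ[ℂ] H) with hV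
  have hVfin : FiniteDimensional ℂ V := Submodule.finiteDimensional_sup _ _
  have hTV : ∀ x ∈ V, T x ∈ V := fun x _ =>
    le_sup_left (α := Submodule ℂ H) (LinearMap.mem_range_self (T : H →ₗ[ℂ] H) x)
  have hTAV : ∀ x ∈ V, adjoint T x ∈ V := fun x _ =>
    le_sup_right (α := Submodule ℂ H) (LinearMap.mem_range_self ((adjoint T : H →L[ℂ] H) : H →ₗ[ℂ] H) x)
  have h1 : ∀ x ∈ V, ((1 : H →L[ℂ] H) + T) x ∈ V := fun x hx => by
    simpa using V.add_mem hx (hTV x hx)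
  have h2 : ∀ x ∈ V, ((1 : H →L[ℂ] H) + adjoint T) x ∈ V := fun x hx => by
    simpa using V.add_mem hx (hTAV x hx)
  set f : V →ₗ[ℂ] V := ((1 : H →L[ℂ] H) + T).toLinearMap.restrict h1 with hf
  set g : V →ₗ[ℂ] V := ((1 : H →L[ℂ] H) + adjoint T).toLinearMap.restrict h2 with hg
  -- the kernels live inside V
  have hker1 : LinearMap.ker (((1 : H →L[ℂ] H) + T : H →L[ℂ] H) : H →ₗ[ℂ] H) ≤ V := by
    intro x hx
    have : x + T x = 0 := by simpa using hx
    have hx' : x = T (-x) := by rw [map_neg]; exact eq_neg_of_add_eq_zero_left this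
    rw [hx']
    exact le_sup_left (α := Submodule ℂ H) (LinearMap.mem_range_self (T : H →ₗ[ℂ] H) (-x))
  have hker2 : LinearMap.ker (((1 : H →L[ℂ] H) + adjoint T : H →L[ℂ] H) : H →ₗ[ℂ] H) ≤ V := by
    intro x hx
    have : x + adjoint T x = 0 := by simpa using hx
    have hx' : x = adjoint T (-x) := by rw [map_neg]; exact eq_neg_of_add_eq_zero_left this
    rw [hx']
    exact le_sup_right (α := Submodule ℂ H) (LinearMap.mem_range_self ((adjoint T : H →L[ℂ] H) : H →ₗ[ℂ] H) (-x))
  -- dimensions of kernels agree with kernels of restrictions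
  have e1 : Module.finrank ℂ (LinearMap.ker f) =
      Module.finrank ℂ (LinearMap.ker (((1 : H →L[ℂ] H) + T : H →L[ℂ] H) : H →ₗ[ℂ] H)) := by
    rw [hf, LinearMap.ker_restrict]
    exact (Submodule.comapSubtypeEquivOfLe hker1).finrank_eq
  have e2 : Module.finrank ℂ (LinearMap.ker g) =
      Module.finrank ℂ (LinearMap.ker (((1 : H →L[ℂ] H) + adjoint T : H →L[ℂ] H) : H →ₗ[ℂ] H)) := by
    rw [hg, LinearMap.ker_restrict]
    exact (Submodule.comapSubtypeEquivOfLe hker2).finrank_eq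
  -- g is the adjoint of f
  have hadj : g = LinearMap.adjoint f := by
    rw [LinearMap.eq_adjoint_iff]
    intro x y
    have : (⟪(g x : H), (y : H)⟫) = ⟪(x : H), (f y : H)⟫ := by
      simp only [hf, hg, LinearMap.restrict_apply, coe_coe, ContinuousLinearMap.add_apply,
        ContinuousLinearMap.one_apply, inner_add_left, inner_add_right]
      rw [ContinuousLinearMap.adjoint_inner_left]
    simpa [Submodule.coe_inner] using this
  rw [← e1, ← e2, hadj]
  exact aux_finrank_ker_adjoint f
end
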